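/- Suppose f(s) > 0 and m_H(s) − m_L(s) > 0 for all s ∈ (0,1). Define the budget-constrained value function V_P2(B) = sup{ U(τ) : τ ∈ [0,1], C(τ) ≤ B } and the quality-constrained value function V_P1(Q) = inf{ C(τ) : τ ∈ [0,1], U(τ) ≥ Q }. Then for every τ* ∈ (0,1), V_P2 is differentiable at B = C(τ*) with V_P2'(C(τ*)) = (m_H(τ*) − m_L(τ*)) / c_H, and the two shadow prices are reciprocal: V_P1'(U(τ*)) · V_P2'(C(τ*)) = 1. -/

import Mathlib

open Set Function intervalIntegral

/-- Auxiliary: the inverse (via `invFunOn`) of a continuous, strictly monotone function on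
`[0,1]` is a local left/right inverse near an interior point, and differentiable there. -/
private lemma inv_deriv_aux (φ : ℝ → ℝ) (hφc : Continuous φ)
    (hφm : StrictMonoOn φ (Icc 0 1)) {τ : ℝ} (hτ : τ ∈ Ioo (0:ℝ) 1)
    {d : ℝ} (hd : HasDerivAt φ d τ) (hd0 : d ≠ 0) :
    (∀ t ∈ Icc (0:ℝ) 1, invFunOn φ (Icc 0 1) (φ t) = t) ∧
    (∀ B ∈ Icc (φ 0) (φ 1),
      invFunOn φ (Icc 0 1) B ∈ Icc (0:ℝ) 1 ∧ φ (invFunOn φ (Icc 0 1) B) = B) ∧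
    HasDerivAt (invFunOn φ (Icc 0 1)) d⁻¹ (φ τ) := by
  set g := invFunOn φ (Icc 0 1) with hg
  have hτI : τ ∈ Icc (0:ℝ) 1 := Ioo_subset_Icc_self hτ
  have h0 : (0:ℝ) ∈ Icc (0:ℝ) 1 := by norm_num
  have h1 : (1:ℝ) ∈ Icc (0:ℝ) 1 := by norm_num
  have hsurj : Icc (φ 0) (φ 1) ⊆ φ '' Icc 0 1 :=
    intermediate_value_Icc (by norm_num) hφc.continuousOn
  have hex : ∀ B ∈ Icc (φ 0) (φ 1), ∃ a ∈ Icc (0:ℝ) 1, φ a = B := by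
    intro B hB
    obtain ⟨a, ha, haB⟩ := hsurj hB
    exact ⟨a, ha, haB⟩
  have hright : ∀ B ∈ Icc (φ 0) (φ 1), g B ∈ Icc (0:ℝ) 1 ∧ φ (g B) = B := fun B hB =>
    ⟨Function.invFunOn_mem (hex B hB), Function.invFunOn_eq (hex B hB)⟩
  have hmemIcc : ∀ t ∈ Icc (0:ℝ) 1, φ t ∈ Icc (φ 0) (φ 1) := fun t ht =>
    ⟨hφm.monotoneOn h0 ht ht.1, hφm.monotoneOn ht h1 ht.2⟩
  have hleft : ∀ t ∈ Icc (0:ℝ) 1, g (φ t) = t := by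
    intro t ht
    have h := hright (φ t) (hmemIcc t ht)
    exact hφm.injOn h.1 ht h.2
  refine ⟨hleft, hright, ?_⟩
  -- φ τ is interior to [φ 0, φ 1]
  have hφτ : φ τ ∈ Ioo (φ 0) (φ 1) := ⟨hφm h0 hτI hτ.1, hφm hτI h1 hτ.2⟩
  have hsnhds : Ioo (φ 0) (φ 1) ∈ nhds (φ τ) := isOpen_Ioo.mem_nhds hφτ
  -- g is monotone on the open interval
  have hgr : ∀ B ∈ Ioo (φ 0) (φ 1), g B ∈ Icc (0:ℝ) 1 ∧ φ (g B) = B := fun B hB =>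
    hright B (Ioo_subset_Icc_self hB)
  have hgmono : MonotoneOn g (Ioo (φ 0) (φ 1)) := by
    intro B₁ hB₁ B₂ hB₂ h12
    have h₁ := hgr B₁ hB₁
    have h₂ := hgr B₂ hB₂
    have : φ (g B₁) ≤ φ (g B₂) := by rw [h₁.2, h₂.2]; exact h12
    exact (hφm.le_iff_le h₁.1 h₂.1).mp this
  -- image of the open interval under g is a neighborhood of τ = g (φ τ)
  have himg : Ioo (0:ℝ) 1 ⊆ g '' Ioo (φ 0) (φ 1) := by
    intro t ht
    exact ⟨φ t, ⟨hφm h0 (Ioo_subset_Icc_self ht) ht.1,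
      hφm (Ioo_subset_Icc_self ht) h1 ht.2⟩, hleft t (Ioo_subset_Icc_self ht)⟩
  have hgτ : g (φ τ) = τ := hleft τ hτI
  have hgcont : ContinuousAt g (φ τ) := by
    apply continuousAt_of_monotoneOn_of_image_mem_nhds hgmono hsnhds
    rw [hgτ]
    exact Filter.mem_of_superset (isOpen_Ioo.mem_nhds hτ) himg
  have hev : ∀ᶠ B in nhds (φ τ), φ (g B) = B :=
    Filter.eventually_of_mem hsnhds (fun B hB => (hgr B hB).2)
  have hd' : HasDerivAt φ d (g (φ τ)) := by rw [hgτ]; exact hd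
  exact HasDerivAt.of_local_left_inverse hgcont hd' hd0 hev

/-- Sup-form value function: `V B = sup {ψ t : t ∈ [0,1], φ t ≤ B}` equals `ψ (φ⁻¹ B)`
near interior budgets, and is differentiable with derivative `dψ / dφ`. -/
private lemma key_sup (φ ψ V : ℝ → ℝ) (hφc : Continuous φ)
    (hφm : StrictMonoOn φ (Icc 0 1)) (hψm : MonotoneOn ψ (Icc 0 1))
    {τ : ℝ} (hτ : τ ∈ Ioo (0:ℝ) 1) {dφ dψ : ℝ}
    (hdφ : HasDerivAt φ dφ τ) (hdψ : HasDerivAt ψ dψ τ) (hdφ0 : dφ ≠ 0)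
    (hV : ∀ B, V B = sSup {u : ℝ | ∃ t ∈ Icc (0:ℝ) 1, φ t ≤ B ∧ u = ψ t}) :
    HasDerivAt V (dψ * dφ⁻¹) (φ τ) := by
  obtain ⟨hleft, hright, hginv⟩ := inv_deriv_aux φ hφc hφm hτ hdφ hdφ0
  set g := invFunOn φ (Icc 0 1) with hg
  have h0 : (0:ℝ) ∈ Icc (0:ℝ) 1 := by norm_num
  have h1 : (1:ℝ) ∈ Icc (0:ℝ) 1 := by norm_num
  have hτI : τ ∈ Icc (0:ℝ) 1 := Ioo_subset_Icc_self hτ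
  have hφτ : φ τ ∈ Ioo (φ 0) (φ 1) := ⟨hφm h0 hτI hτ.1, hφm hτI h1 hτ.2⟩
  have hsnhds : Ioo (φ 0) (φ 1) ∈ nhds (φ τ) := isOpen_Ioo.mem_nhds hφτ
  have heq : ∀ B ∈ Ioo (φ 0) (φ 1), V B = ψ (g B) := by
    intro B hB
    have hgB := hright B (Ioo_subset_Icc_self hB)
    rw [hV]
    apply IsGreatest.csSup_eq
    constructor
    · exact ⟨g B, hgB.1, le_of_eq hgB.2, rfl⟩
    · rintro u ⟨t, ht, htB, rfl⟩
      have : φ t ≤ φ (g B) := by rw [hgB.2]; exact htB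
      exact hψm ht hgB.1 ((hφm.le_iff_le ht hgB.1).mp this)
  have hgτ : g (φ τ) = τ := hleft τ hτI
  have hdψ' : HasDerivAt ψ dψ (g (φ τ)) := by rw [hgτ]; exact hdψ
  have hcomp : HasDerivAt (ψ ∘ g) (dψ * dφ⁻¹) (φ τ) := HasDerivAt.comp (φ τ) hdψ' hginv
  apply hcomp.congr_of_eventuallyEq
  exact Filter.eventually_of_mem hsnhds (fun B hB => heq B hB)

/-- Inf-form value function: `V Q = inf {φ t : t ∈ [0,1], Q ≤ ψ t}` is differentiable
with derivative `dφ / dψ`. -/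
private lemma key_inf (φ ψ V : ℝ → ℝ) (hψc : Continuous ψ)
    (hψm : StrictMonoOn ψ (Icc 0 1)) (hφm : MonotoneOn φ (Icc 0 1))
    {τ : ℝ} (hτ : τ ∈ Ioo (0:ℝ) 1) {dφ dψ : ℝ}
    (hdφ : HasDerivAt φ dφ τ) (hdψ : HasDerivAt ψ dψ τ) (hdψ0 : dψ ≠ 0)
    (hV : ∀ Q, V Q = sInf {c : ℝ | ∃ t ∈ Icc (0:ℝ) 1, Q ≤ ψ t ∧ c = φ t}) :
    HasDerivAt V (dφ * dψ⁻¹) (ψ τ) := by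
  obtain ⟨hleft, hright, hginv⟩ := inv_deriv_aux ψ hψc hψm hτ hdψ hdψ0
  set g := invFunOn ψ (Icc 0 1) with hg
  have h0 : (0:ℝ) ∈ Icc (0:ℝ) 1 := by norm_num
  have h1 : (1:ℝ) ∈ Icc (0:ℝ) 1 := by norm_num
  have hτI : τ ∈ Icc (0:ℝ) 1 := Ioo_subset_Icc_self hτ
  have hψτ : ψ τ ∈ Ioo (ψ 0) (ψ 1) := ⟨hψm h0 hτI hτ.1, hψm hτI h1 hτ.2⟩
  have hsnhds : Ioo (ψ 0) (ψ 1) ∈ nhds (ψ τ) := isOpen_Ioo.mem_nhds hψτ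
  have heq : ∀ Q ∈ Ioo (ψ 0) (ψ 1), V Q = φ (g Q) := by
    intro Q hQ
    have hgQ := hright Q (Ioo_subset_Icc_self hQ)
    rw [hV]
    apply IsLeast.csInf_eq
    constructor
    · exact ⟨g Q, hgQ.1, le_of_eq hgQ.2.symm, rfl⟩
    · rintro c ⟨t, ht, htQ, rfl⟩
      have : ψ (g Q) ≤ ψ t := by rw [hgQ.2]; exact htQ
      exact hφm hgQ.1 ht ((hψm.le_iff_le hgQ.1 ht).mp this)
  have hgτ : g (ψ τ) = τ := hleft τ hτI
  have hdφ' : HasDerivAt φ dφ (g (ψ τ)) := by rw [hgτ]; exact hdφ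
  have hcomp : HasDerivAt (φ ∘ g) (dφ * dψ⁻¹) (ψ τ) := HasDerivAt.comp (ψ τ) hdφ' hginv
  apply hcomp.congr_of_eventuallyEq
  exact Filter.eventually_of_mem hsnhds (fun Q hQ => heq Q hQ)

/-- If `f > 0` and `mH - mL > 0` on `(0,1)`, the
budget-constrained value function `V_P2(B) = sup { U τ : τ ∈ [0,1], C τ ≤ B }`
is differentiable at `B = C τ*` with derivative `(mH τ* - mL τ*) / cH`, and the
shadow prices of the two dual problems are reciprocal:
`V_P1'(U τ*) · V_P2'(C τ*) = 1`, where
`V_P1(Q) = inf { C τ : τ ∈ [0,1], U τ ≥ Q }`. -/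
theorem two_model_cascade_reciprocal_shadow_prices
    (f mL mH : ℝ → ℝ) (hf : Continuous f)
    (hf0 : ∀ s ∈ Set.Icc (0:ℝ) 1, 0 ≤ f s)
    (hfint : (∫ s in (0:ℝ)..1, f s) = 1)
    (hmL : Continuous mL) (hmH : Continuous mH)
    (cL cH : ℝ) (hcL : 0 ≤ cL) (hcH : 0 < cH)
    (C U : ℝ → ℝ)
    (hC : ∀ τ, C τ = cL + cH * ∫ s in (0:ℝ)..τ, f s)
    (hU : ∀ τ, U τ = (∫ s in (0:ℝ)..τ, mH s * f s) + ∫ s in τ..(1:ℝ), mL s * f s)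
    (hfpos : ∀ s ∈ Set.Ioo (0:ℝ) 1, 0 < f s)
    (hdom : ∀ s ∈ Set.Ioo (0:ℝ) 1, 0 < mH s - mL s)
    (VP1 VP2 : ℝ → ℝ)
    (hVP1 : ∀ Q, VP1 Q = sInf {c : ℝ | ∃ τ ∈ Set.Icc (0:ℝ) 1, Q ≤ U τ ∧ c = C τ})
    (hVP2 : ∀ B, VP2 B = sSup {u : ℝ | ∃ τ ∈ Set.Icc (0:ℝ) 1, C τ ≤ B ∧ u = U τ})
    (τstar : ℝ) (hτstar : τstar ∈ Set.Ioo (0:ℝ) 1) :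
    HasDerivAt VP2 ((mH τstar - mL τstar) / cH) (C τstar) ∧
    deriv VP1 (U τstar) * deriv VP2 (C τstar) = 1 := by
  -- derivatives of C and U everywhere
  have hdC : ∀ t : ℝ, HasDerivAt C (cH * f t) t := by
    intro t
    have hprim : HasDerivAt (fun u => ∫ s in (0:ℝ)..u, f s) (f t) t :=
      intervalIntegral.integral_hasDerivAt_right (hf.intervalIntegrable 0 t)
        (hf.aestronglyMeasurable.stronglyMeasurableAtFilter) hf.continuousAt
    have : HasDerivAt (fun u => cL + cH * ∫ s in (0:ℝ)..u, f s) (cH * f t) t :=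
      ((hprim.const_mul cH).const_add cL)
    exact (funext hC : C = _) ▸ this
  have hmHf : Continuous (fun s => mH s * f s) := hmH.mul hf
  have hmLf : Continuous (fun s => mL s * f s) := hmL.mul hf
  have hUeq : U = fun t => (∫ s in (0:ℝ)..t, mH s * f s) +
      ((∫ s in (0:ℝ)..1, mL s * f s) - ∫ s in (0:ℝ)..t, mL s * f s) := by
    funext t
    rw [hU t]
    congr 1
    rw [intervalIntegral.integral_interval_sub_left (hmLf.intervalIntegrable 0 1)
      (hmLf.intervalIntegrable 0 t)]
  have hdU : ∀ t : ℝ, HasDerivAt U ((mH t - mL t) * f t) t := by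
    intro t
    have h1 : HasDerivAt (fun u => ∫ s in (0:ℝ)..u, mH s * f s) (mH t * f t) t :=
      intervalIntegral.integral_hasDerivAt_right (hmHf.intervalIntegrable 0 t)
        (hmHf.aestronglyMeasurable.stronglyMeasurableAtFilter) hmHf.continuousAt
    have h2 : HasDerivAt (fun u => ∫ s in (0:ℝ)..u, mL s * f s) (mL t * f t) t :=
      intervalIntegral.integral_hasDerivAt_right (hmLf.intervalIntegrable 0 t)
        (hmLf.aestronglyMeasurable.stronglyMeasurableAtFilter) hmLf.continuousAt
    have h3 := h1.add ((hasDerivAt_const t (∫ s in (0:ℝ)..1, mL s * f s)).sub h2)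
    rw [hUeq]
    convert h3 using 1
    · rfl
    · rfl
    · rfl
    · ring
  -- continuity
  have hCc : Continuous C := continuous_iff_continuousAt.mpr fun t => (hdC t).continuousAt
  have hUc : Continuous U := continuous_iff_continuousAt.mpr fun t => (hdU t).continuousAt
  -- strict monotonicity on [0,1]
  have hCm : StrictMonoOn C (Icc 0 1) := by
    apply strictMonoOn_of_deriv_pos (convex_Icc 0 1) hCc.continuousOn
    intro x hx
    rw [interior_Icc] at hx
    rw [(hdC x).deriv]
    exact mul_pos hcH (hfpos x hx)
  have hUm : StrictMonoOn U (Icc 0 1) := by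
    apply strictMonoOn_of_deriv_pos (convex_Icc 0 1) hUc.continuousOn
    intro x hx
    rw [interior_Icc] at hx
    rw [(hdU x).deriv]
    exact mul_pos (hdom x hx) (hfpos x hx)
  have hfτ : 0 < f τstar := hfpos τstar hτstar
  have hdτ : 0 < mH τstar - mL τstar := hdom τstar hτstar
  have hdCτ0 : cH * f τstar ≠ 0 := (mul_pos hcH hfτ).ne'
  have hdUτ0 : (mH τstar - mL τstar) * f τstar ≠ 0 := (mul_pos hdτ hfτ).ne'
  have hVP2d : HasDerivAt VP2 ((mH τstar - mL τstar) * f τstar * (cH * f τstar)⁻¹)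
      (C τstar) :=
    key_sup C U VP2 hCc hCm hUm.monotoneOn hτstar (hdC τstar) (hdU τstar) hdCτ0 hVP2
  have hVP1d : HasDerivAt VP1 (cH * f τstar * ((mH τstar - mL τstar) * f τstar)⁻¹)
      (U τstar) :=
    key_inf C U VP1 hUc hUm hCm.monotoneOn hτstar (hdC τstar) (hdU τstar) hdUτ0 hVP1
  have hval2 : (mH τstar - mL τstar) * f τstar * (cH * f τstar)⁻¹
      = (mH τstar - mL τstar) / cH := by
    field_simp
  constructor
  · rw [← hval2]; exact hVP2d
  · rw [hVP1d.deriv, hVP2d.deriv]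
    field_simp
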